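/- Let 0<q<1, let l be a positive integer, let s ∈ {1,…,l} and let λ ∈ ℂ with |λ| = 1. The bounded operators C, D on ℓ²(ℕ) defined by C e_0 = 0, C e_p = ∏_{m=1}^{l}(1 - q^{2(pl+s-m)})^{1/2} e_{p-1} for p ≥ 1, and D e_p = λ q^{pl+s} e_p satisfy CD = q^l DC, CD* = q^l D*C, DD* = D*D, CC* = ∏_{m=0}^{l-1}(1 - q^{2m} DD*), and C*C = ∏_{m=1}^{l}(1 - q^{-2m} DD*). Consequently c ↦ C, d ↦ D defines a unital *-representation π_s^λ of O(L_q(l;1,l)) on ℓ²(ℕ). -/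

import Mathlib

/-- The defining relations of the quantum lens space `O(L_q(l;1,l))`:
`cd = q^l dc`, `cd* = q^l d*c`, `dd* = d*d`, `cc* = ∏_{m=0}^{l-1}(1-q^{2m}dd*)`,
`c*c = ∏_{m=1}^{l}(1-q^{-2m}dd*)`. -/
structure LensRels {A : Type*} [Ring A] [Algebra ℂ A] [StarRing A]
    (q : ℝ) (l : ℕ) (c d : A) : Prop where
  rel1 : c * d = ((q : ℂ) ^ l) • (d * c)
  rel2 : c * star d = ((q : ℂ) ^ l) • (star d * c)
  rel3 : d * star d = star d * d
  rel4 : c * star c =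
      ((List.range l).map (fun m => 1 - ((q : ℂ) ^ (2 * m)) • (d * star d))).prod
  rel5 : star c * c =
      ((List.range l).map (fun m => 1 - ((q : ℂ)⁻¹ ^ (2 * (m + 1))) • (d * star d))).prod

/-- `A` together with `c d : A` is the universal unital complex `*`-algebra on
generators `c, d` subject to the `O(L_q(l;1,l))` relations. -/
def IsUniversalLens (q : ℝ) (l : ℕ) {A : Type*} [Ring A] [Algebra ℂ A] [StarRing A]
    [StarModule ℂ A] (c d : A) : Prop :=
  LensRels q l c d ∧
  ∀ (B : Type) [Ring B] [Algebra ℂ B] [StarRing B] [StarModule ℂ B],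
    ∀ c' d' : B, LensRels q l c' d' → ∃! f : A →⋆ₐ[ℂ] B, f c = c' ∧ f d = d'

noncomputable section

/-- The Hilbert space `ℓ²(ℕ)` of square-summable complex sequences. -/
abbrev ℓ2 : Type := lp (fun _ : ℕ => ℂ) 2

/-- The standard orthonormal basis vectors of `ℓ²(ℕ)`. -/
def e (p : ℕ) : ℓ2 := lp.single 2 p 1

local notation "⟪" x ", " y "⟫" => @inner ℂ _ _ x y

lemma e_apply (p r : ℕ) : (e p : ∀ _ : ℕ, ℂ) r = if r = p then 1 else 0 := by
  rw [e, lp.single_apply]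
  split_ifs with h
  · subst h; simp
  · simp [Pi.single_apply, h]

lemma inner_e_left (p : ℕ) (x : ℓ2) : ⟪e p, x⟫ = x p := by
  rw [e, lp.inner_single_left]
  simp [inner]

lemma eq_of_inner_e {x y : ℓ2} (h : ∀ p, ⟪e p, x⟫ = ⟪e p, y⟫) : x = y := by
  apply lp.ext
  funext p
  have := h p
  rwa [inner_e_left, inner_e_left] at this

lemma clm_ext_e {T S : ℓ2 →L[ℂ] ℓ2} (h : ∀ p, T (e p) = S (e p)) : T = S := by
  refine ContinuousLinearMap.ext fun x => ?_
  have hx : HasSum (fun p => lp.single 2 p (x p)) x := lp.hasSum_single ENNReal.ofNat_ne_top x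
  have key : ∀ p, T (lp.single 2 p (x p)) = S (lp.single 2 p (x p)) := by
    intro p
    have h1 : lp.single 2 p (x p) = (x p) • e p := by
      rw [e, ← lp.single_smul]; norm_num
    rw [h1, map_smul, map_smul, h p]
  have hT := hx.mapL T
  have hS := hx.mapL S
  simp only [← key] at hS
  exact hT.unique hS

lemma star_apply_e {T : ℓ2 →L[ℂ] ℓ2} {y : ℓ2} (p : ℕ)
    (h : ∀ r, ⟪T (e r), e p⟫ = ⟪e r, y⟫) : (star T) (e p) = y := by
  rw [ContinuousLinearMap.star_eq_adjoint]
  apply eq_of_inner_e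
  intro r
  rw [ContinuousLinearMap.adjoint_inner_right]
  exact h r

lemma list_prod_eig (x : ℓ2) (M : List ℕ) (f : ℕ → (ℓ2 →L[ℂ] ℓ2)) (g : ℕ → ℂ)
    (h : ∀ m ∈ M, f m x = g m • x) :
    ((M.map f).prod) x = ((M.map g).prod) • x := by
  induction M with
  | nil => simp
  | cons a M ih =>
    simp only [List.map_cons, List.prod_cons, ContinuousLinearMap.mul_apply]
    rw [ih (fun m hm => h m (List.mem_cons_of_mem a hm)), map_smul,
      h a (List.mem_cons_self (a := a) (l := M)), smul_smul, mul_comm]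

/-- The coefficient `∏_{m=1}^{l}(1 - q^{2(pl+s-m)})^{1/2}`. -/
def lensCoef (q : ℝ) (l s p : ℕ) : ℝ :=
  ∏ m ∈ Finset.range l, Real.sqrt (1 - q ^ (2 * (p * l + s) - 2 * (m + 1)))

/-- For `s ∈ {1, …, l}` and `λ ∈ ℂ` with `|λ| = 1`, the bounded
operators `C, D` on `ℓ²(ℕ)` given by `C e_0 = 0`,
`C e_p = ∏_{m=1}^{l}(1 - q^{2(pl+s-m)})^{1/2} e_{p-1}` for `p ≥ 1` and
`D e_p = λ q^{pl+s} e_p` satisfy the defining relations of `O(L_q(l;1,l))`, and hence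
`c ↦ C`, `d ↦ D` defines a unital `*`-representation `π_s^λ` of `O(L_q(l;1,l))`. -/
theorem lens_space_representation
    (q : ℝ) (hq0 : 0 < q) (hq1 : q < 1) (l : ℕ) (hl : 0 < l)
    (s : ℕ) (hs1 : 1 ≤ s) (hsl : s ≤ l)
    (lam : ℂ) (hlam : ‖lam‖ = 1)
    (C D : ℓ2 →L[ℂ] ℓ2)
    (hC0 : C (e 0) = 0)
    (hC : ∀ p : ℕ, C (e (p + 1)) =
      ((∏ m ∈ Finset.range l,
        Real.sqrt (1 - q ^ (2 * ((p + 1) * l + s) - 2 * (m + 1))) : ℝ) : ℂ) • e p)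
    (hD : ∀ p : ℕ, D (e p) = (lam * (q : ℂ) ^ (p * l + s)) • e p)
    {L : Type*} [Ring L] [Algebra ℂ L] [StarRing L] [StarModule ℂ L]
    (c d : L) (hL : IsUniversalLens q l c d) :
    LensRels q l C D ∧
      ∃ π : L →⋆ₐ[ℂ] (ℓ2 →L[ℂ] ℓ2), π c = C ∧ π d = D := by
  obtain ⟨-, huniv⟩ := hL
  have hqC : (q : ℂ) ≠ 0 := Complex.ofReal_ne_zero.mpr hq0.ne'
  -- C on the basis, expressed with `lensCoef`
  have hC' : ∀ p : ℕ, C (e (p + 1)) = ((lensCoef q l s (p + 1) : ℝ) : ℂ) • e p := hC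
  -- conjugate of lam times lam
  have hconj : (starRingEnd ℂ) lam * lam = 1 := by
    have : lam * (starRingEnd ℂ) lam = 1 := by
      rw [Complex.mul_conj, Complex.normSq_eq_norm_sq, hlam]
      norm_num
    rwa [mul_comm] at this
  -- nonnegativity of the factors
  have hfac_nonneg : ∀ p m : ℕ, m < l →
      0 ≤ 1 - q ^ (2 * ((p + 1) * l + s) - 2 * (m + 1)) := by
    intro p m hm
    have h1 : l ≤ (p + 1) * l := Nat.le_mul_of_pos_left l (Nat.succ_pos p)
    have hexp : 0 < 2 * ((p + 1) * l + s) - 2 * (m + 1) := by omega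
    have := pow_lt_one₀ hq0.le hq1 hexp.ne'
    linarith
  have hcoefsq : ∀ p : ℕ, (lensCoef q l s (p + 1)) ^ 2 =
      ∏ m ∈ Finset.range l, (1 - q ^ (2 * ((p + 1) * l + s) - 2 * (m + 1))) := by
    intro p
    rw [lensCoef, ← Finset.prod_pow]
    refine Finset.prod_congr rfl fun m hm => ?_
    rw [sq, Real.mul_self_sqrt (hfac_nonneg p m (Finset.mem_range.mp hm))]
  -- adjoint of C on the basis
  have hCstar : ∀ p : ℕ, (star C) (e p) = ((lensCoef q l s (p + 1) : ℝ) : ℂ) • e (p + 1) := by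
    intro p
    apply star_apply_e
    intro r
    match r with
    | 0 => simp [hC0, inner_e_left, e_apply, lp.coeFn_smul]
    | (t + 1) =>
      rw [hC' t]
      by_cases htp : t = p
      · subst htp
        simp [inner_smul_left, inner_e_left, e_apply, lp.coeFn_smul, Complex.conj_ofReal]
        left; simp [e, lp.norm_single (by norm_num : (0 : ENNReal) < 2)]
      · simp [inner_smul_left, inner_e_left, e_apply, lp.coeFn_smul, htp]
  -- adjoint of D on the basis
  have hDstar : ∀ p : ℕ,
      (star D) (e p) = ((starRingEnd ℂ) lam * (q : ℂ) ^ (p * l + s)) • e p := by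
    intro p
    apply star_apply_e
    intro r
    rw [hD r]
    by_cases hrp : r = p
    · subst hrp
      simp [inner_smul_left, inner_smul_right, inner_e_left, e_apply, lp.coeFn_smul,
        map_mul, map_pow, Complex.conj_ofReal, mul_comm]
    · simp [inner_smul_left, inner_smul_right, inner_e_left, e_apply, lp.coeFn_smul, hrp]
  -- D D* and D* D on the basis
  have hDD : ∀ p : ℕ, (D * star D) (e p) = ((q : ℂ) ^ (2 * (p * l + s))) • e p := by
    intro p
    rw [ContinuousLinearMap.mul_apply, hDstar p, map_smul, hD p, smul_smul]
    congr 1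
    rw [mul_mul_mul_comm, hconj, one_mul, ← pow_add, two_mul]
  have hDDs : ∀ p : ℕ, (star D * D) (e p) = ((q : ℂ) ^ (2 * (p * l + s))) • e p := by
    intro p
    rw [ContinuousLinearMap.mul_apply, hD p, map_smul, hDstar p, smul_smul]
    congr 1
    rw [mul_mul_mul_comm, mul_comm lam _, hconj, one_mul, ← pow_add, two_mul]
  -- relation 1
  have rel1 : C * D = ((q : ℂ) ^ l) • (D * C) := by
    apply clm_ext_e; intro p
    cases p with
    | zero =>
      rw [ContinuousLinearMap.mul_apply, hD 0, map_smul, hC0,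
        ContinuousLinearMap.smul_apply, ContinuousLinearMap.mul_apply, hC0, map_zero]
      simp
    | succ p =>
      rw [ContinuousLinearMap.mul_apply, hD (p + 1), map_smul, hC' p,
        ContinuousLinearMap.smul_apply, ContinuousLinearMap.mul_apply, hC' p, map_smul,
        hD p, smul_smul, smul_smul, smul_smul]
      congr 1
      have hexp : (p + 1) * l + s = l + (p * l + s) := by ring
      rw [hexp, pow_add]
      ring
  -- relation 2
  have rel2 : C * star D = ((q : ℂ) ^ l) • (star D * C) := by
    apply clm_ext_e; intro p
    cases p with
    | zero =>
      rw [ContinuousLinearMap.mul_apply, hDstar 0, map_smul, hC0,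
        ContinuousLinearMap.smul_apply, ContinuousLinearMap.mul_apply, hC0, map_zero]
      simp
    | succ p =>
      rw [ContinuousLinearMap.mul_apply, hDstar (p + 1), map_smul, hC' p,
        ContinuousLinearMap.smul_apply, ContinuousLinearMap.mul_apply, hC' p, map_smul,
        hDstar p, smul_smul, smul_smul, smul_smul]
      congr 1
      have hexp : (p + 1) * l + s = l + (p * l + s) := by ring
      rw [hexp, pow_add]
      ring
  -- relation 3
  have rel3 : D * star D = star D * D := by
    apply clm_ext_e; intro p
    rw [hDD p, hDDs p]
  -- relation 4
  have rel4 : C * star C =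
      ((List.range l).map (fun m => 1 - ((q : ℂ) ^ (2 * m)) • (D * star D))).prod := by
    apply clm_ext_e; intro p
    have hR : (((List.range l).map
          (fun m => 1 - ((q : ℂ) ^ (2 * m)) • (D * star D))).prod) (e p)
        = (((List.range l).map
          (fun m => 1 - (q : ℂ) ^ (2 * m) * (q : ℂ) ^ (2 * (p * l + s)))).prod) • e p := by
      apply list_prod_eig
      intro m hm
      simp only [ContinuousLinearMap.sub_apply, ContinuousLinearMap.one_apply,
        ContinuousLinearMap.smul_apply, hDD p, smul_smul, sub_smul, one_smul]
    rw [hR, ContinuousLinearMap.mul_apply, hCstar p, map_smul, hC' p, smul_smul]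
    congr 1
    have hlist : ((List.range l).map
          (fun m => 1 - (q : ℂ) ^ (2 * m) * (q : ℂ) ^ (2 * (p * l + s)))).prod
        = ∏ m ∈ Finset.range l, (1 - (q : ℂ) ^ (2 * m) * (q : ℂ) ^ (2 * (p * l + s))) := rfl
    rw [hlist]
    calc ((lensCoef q l s (p + 1) : ℝ) : ℂ) * ((lensCoef q l s (p + 1) : ℝ) : ℂ)
        = (((lensCoef q l s (p + 1)) ^ 2 : ℝ) : ℂ) := by push_cast; ring
      _ = ((∏ m ∈ Finset.range l,
            (1 - q ^ (2 * ((p + 1) * l + s) - 2 * (m + 1))) : ℝ) : ℂ) := by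
          rw [hcoefsq p]
      _ = ∏ m ∈ Finset.range l,
            ((1 - q ^ (2 * ((p + 1) * l + s) - 2 * (m + 1)) : ℝ) : ℂ) := by
          push_cast; rfl
      _ = ∏ m ∈ Finset.range l,
            (1 - (q : ℂ) ^ (2 * m) * (q : ℂ) ^ (2 * (p * l + s))) := by
          rw [← Finset.prod_range_reflect
            (fun m => ((1 - q ^ (2 * ((p + 1) * l + s) - 2 * (m + 1)) : ℝ) : ℂ)) l]
          refine Finset.prod_congr rfl fun m hm => ?_
          have hm' : m < l := Finset.mem_range.mp hm
          have h1 : (p + 1) * l = p * l + l := by ring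
          have hexp : 2 * ((p + 1) * l + s) - 2 * ((l - 1 - m) + 1)
              = 2 * m + 2 * (p * l + s) := by omega
          simp only [hexp]
          push_cast
          rw [pow_add]
  -- relation 5
  have rel5 : star C * C =
      ((List.range l).map (fun m => 1 - ((q : ℂ)⁻¹ ^ (2 * (m + 1))) • (D * star D))).prod := by
    apply clm_ext_e; intro p
    have hR : (((List.range l).map
          (fun m => 1 - ((q : ℂ)⁻¹ ^ (2 * (m + 1))) • (D * star D))).prod) (e p)
        = (((List.range l).map
          (fun m => 1 - (q : ℂ)⁻¹ ^ (2 * (m + 1)) * (q : ℂ) ^ (2 * (p * l + s)))).prod)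
          • e p := by
      apply list_prod_eig
      intro m hm
      simp only [ContinuousLinearMap.sub_apply, ContinuousLinearMap.one_apply,
        ContinuousLinearMap.smul_apply, hDD p, smul_smul, sub_smul, one_smul]
    rw [hR]
    have hlist : ((List.range l).map
          (fun m => 1 - (q : ℂ)⁻¹ ^ (2 * (m + 1)) * (q : ℂ) ^ (2 * (p * l + s)))).prod
        = ∏ m ∈ Finset.range l,
            (1 - (q : ℂ)⁻¹ ^ (2 * (m + 1)) * (q : ℂ) ^ (2 * (p * l + s))) := rfl
    rw [hlist]
    cases p with
    | zero =>
      rw [ContinuousLinearMap.mul_apply, hC0, map_zero]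
      have hzero : (∏ m ∈ Finset.range l,
          (1 - (q : ℂ)⁻¹ ^ (2 * (m + 1)) * (q : ℂ) ^ (2 * (0 * l + s)))) = 0 := by
        apply Finset.prod_eq_zero (i := s - 1) (Finset.mem_range.mpr (by omega))
        have h1 : 2 * ((s - 1) + 1) = 2 * s := by omega
        have h2 : 2 * (0 * l + s) = 2 * s := by omega
        rw [h1, h2, inv_pow, inv_mul_cancel₀ (pow_ne_zero _ hqC), sub_self]
      rw [hzero, zero_smul]
    | succ p =>
      rw [ContinuousLinearMap.mul_apply, hC' p, map_smul, hCstar p, smul_smul]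
      congr 1
      calc ((lensCoef q l s (p + 1) : ℝ) : ℂ) * ((lensCoef q l s (p + 1) : ℝ) : ℂ)
          = (((lensCoef q l s (p + 1)) ^ 2 : ℝ) : ℂ) := by push_cast; ring
        _ = ((∏ m ∈ Finset.range l,
              (1 - q ^ (2 * ((p + 1) * l + s) - 2 * (m + 1))) : ℝ) : ℂ) := by
            rw [hcoefsq p]
        _ = ∏ m ∈ Finset.range l,
              ((1 - q ^ (2 * ((p + 1) * l + s) - 2 * (m + 1)) : ℝ) : ℂ) := by
            push_cast; rfl
        _ = ∏ m ∈ Finset.range l,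
              (1 - (q : ℂ)⁻¹ ^ (2 * (m + 1)) * (q : ℂ) ^ (2 * ((p + 1) * l + s))) := by
            refine Finset.prod_congr rfl fun m hm => ?_
            have hm' : m < l := Finset.mem_range.mp hm
            have h1 : (p + 1) * l = p * l + l := by ring
            have hle : 2 * (m + 1) ≤ 2 * ((p + 1) * l + s) := by omega
            have hsplit : (q : ℂ) ^ (2 * ((p + 1) * l + s))
                = (q : ℂ) ^ (2 * (m + 1)) *
                  (q : ℂ) ^ (2 * ((p + 1) * l + s) - 2 * (m + 1)) := by
              rw [← pow_add]; congr 1; omega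
            rw [hsplit, inv_pow, inv_mul_cancel_left₀ (pow_ne_zero _ hqC)]
            push_cast
            ring
  have hrels : LensRels q l C D := ⟨rel1, rel2, rel3, rel4, rel5⟩
  obtain ⟨f, hf, -⟩ := huniv (ℓ2 →L[ℂ] ℓ2) C D hrels
  exact ⟨hrels, f, hf⟩
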